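/- If X is a cut threshold set ct(s, φ) and Y is an extreme set, then either Y\X contains no terminal, or X∩Y = ∅, or X\Y = ∅. -/
import Mathlib


variable {V : Type*}

def IsSteinerCut (T X : Set V) : Prop := (X ∩ T).Nonempty ∧ ¬ T ⊆ X

def SteinerExtreme (d : Set V → ℝ) (T X : Set V) : Prop :=
  IsSteinerCut T X ∧ ∀ Y, IsSteinerCut T Y → Y ⊂ X → d X < d Y

/-- `S` is (the `t`-side of) an `s`-`t` cut. -/
def IsStCut (s t : V) (S : Set V) : Prop := t ∈ S ∧ s ∉ S

/-- The cut threshold `ct(s, φ) = {t : λ(s,t) ≥ φ} ∪ {s}`. -/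
def cutThreshold (lam : V → V → ℝ) (s : V) (φ : ℝ) : Set V :=
  {t | φ ≤ lam s t} ∪ {s}

/-- For any cut threshold `X = ct(s, φ)` and extreme set `Y`, either `Y \ X`
contains no terminal, or `X ∩ Y = ∅`, or `X \ Y = ∅`. -/
theorem cutThreshold_uncross_terminal [Fintype V] (d : Set V → ℝ) (T : Set V)
    (lam : V → V → ℝ) (s : V) (φ : ℝ) (Y : Set V)
    (hsymm : ∀ A : Set V, d Aᶜ = d A)
    (hlam_lb : ∀ t S, IsStCut s t S → lam s t ≤ d S)
    (hlam_att : ∀ t, t ≠ s → ∃ S, IsStCut s t S ∧ d S = lam s t)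
    (hlam_uniq : ∀ t, t ≠ s → ∃! S, IsStCut s t S ∧ d S = lam s t)
    (h4 : ∀ A B : Set V, d A < d (A ∩ B) → d (A ∪ B) < d B)
    (hY : SteinerExtreme d T Y) :
    (Y \ cutThreshold lam s φ) ∩ T = ∅ ∨
      cutThreshold lam s φ ∩ Y = ∅ ∨ cutThreshold lam s φ \ Y = ∅ := by
  by_contra h
  push_neg at h
  obtain ⟨h1, h2, h3⟩ := h
  obtain ⟨t, ⟨htY, htX⟩, htT⟩ := h1
  obtain ⟨u, huX, huY⟩ := h2
  obtain ⟨v, hvX, hvY⟩ := h3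
  have hts : t ≠ s := fun h => htX (Or.inr h)
  have hlt : lam s t < φ := lt_of_not_ge (fun h => htX (Or.inl h))
  obtain ⟨S, hS, hdS⟩ := hlam_att t hts
  have huS : u ∉ S := by
    rcases huX with hu | hu
    · intro hmem
      have := hlam_lb u S ⟨hmem, hS.2⟩
      have : φ ≤ d S := le_trans hu this
      rw [hdS] at this; linarith
    · simp only [Set.mem_singleton_iff] at hu
      exact hu ▸ hS.2
  have hsub : Y ∩ S ⊂ Y :=
    ⟨Set.inter_subset_left, fun hss => huS (hss huY).2⟩
  have hSteiner : IsSteinerCut T (Y ∩ S) :=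
    ⟨⟨t, ⟨⟨htY, hS.1⟩, htT⟩⟩, fun hT => hY.1.2 (hT.trans Set.inter_subset_left)⟩
  have hdY : d Y < d (Y ∩ S) := hY.2 _ hSteiner hsub
  have hun : d (Y ∪ S) < d S := h4 Y S hdY
  by_cases hsY : s ∈ Y
  · -- use v ∈ X \ Y
    have hv : φ ≤ lam s v := by
      rcases hvX with hv | hv
      · exact hv
      · simp only [Set.mem_singleton_iff] at hv
        exact absurd (hv ▸ hsY) hvY
    have hvS : v ∉ S := by
      intro hmem
      have := hlam_lb v S ⟨hmem, hS.2⟩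
      rw [hdS] at this; linarith
    have hcut : IsStCut s v (Y ∪ S)ᶜ :=
      ⟨by simp [hvY, hvS], by simp [hsY]⟩
    have := hlam_lb v _ hcut
    rw [hsymm] at this
    linarith [hdS ▸ hun]
  · have hcut : IsStCut s t (Y ∪ S) := ⟨Or.inl htY, by simp [hsY, hS.2]⟩
    have := hlam_lb t _ hcut
    linarith [hdS ▸ hun]
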